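/- Let G be a finite simple graph with an edge uv, and let G' be the graph obtained from G by subdividing the edge uv twice, i.e., by deleting the edge uv and adding two new vertices x and y together with the edges ux, xy and yv. Then G has a forced vertex if and only if G' has a forced vertex. -/

import Mathlib

open SimpleGraph

universe u
variable {V : Type*} {W : Type*}

/-- `H` is isomorphic to an induced subgraph of `G`. -/
def SimpleGraph.IsIndSubgraph {W V : Type*} (H : SimpleGraph W) (G : SimpleGraph V) : Prop :=
  ∃ f : W ↪ V, ∀ a b, G.Adj (f a) (f b) ↔ H.Adj a b

/-- A set of pairwise non-adjacent vertices. -/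
def SimpleGraph.IsIndepSet' (G : SimpleGraph V) (s : Set V) : Prop :=
  s.Pairwise fun a b => ¬ G.Adj a b

/-- The independence number of `G`. -/
noncomputable def SimpleGraph.indepNum' (G : SimpleGraph V) : ℕ :=
  sSup {n | ∃ s : Set V, G.IsIndepSet' s ∧ s.ncard = n}

/-- A matching, viewed as a set of pairwise disjoint edges of `G`. -/
def SimpleGraph.IsMatchingSet (G : SimpleGraph V) (M : Set (Sym2 V)) : Prop :=
  M ⊆ G.edgeSet ∧ M.Pairwise fun e f => ∀ x, x ∈ e → x ∉ f

/-- The matching number of `G`. -/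
noncomputable def SimpleGraph.matchingNum (G : SimpleGraph V) : ℕ :=
  sSup {n | ∃ M : Set (Sym2 V), G.IsMatchingSet M ∧ M.ncard = n}

/-- A vertex cover. -/
def SimpleGraph.IsVertexCover' (G : SimpleGraph V) (C : Set V) : Prop :=
  ∀ u v, G.Adj u v → u ∈ C ∨ v ∈ C

/-- Contraction of the edge `uv`, identifying the new vertex with `v`. -/
def SimpleGraph.contractEdge (G : SimpleGraph V) (u v : V) : SimpleGraph {x : V // x ≠ u} where
  Adj x y := x ≠ y ∧ (G.Adj x y ∨ (x.1 = v ∧ G.Adj u y) ∨ (y.1 = v ∧ G.Adj u x))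
  symm := ⟨by
    rintro x y ⟨hne, h⟩
    refine ⟨hne.symm, ?_⟩
    rcases h with h | h | h
    · exact Or.inl h.symm
    · exact Or.inr (Or.inr h)
    · exact Or.inr (Or.inl h)⟩
  loopless := ⟨fun x h => h.1 rfl⟩

/-- A maximal clique. -/
def SimpleGraph.IsMaxlClique (G : SimpleGraph V) (K : Set V) : Prop :=
  G.IsClique K ∧ ∀ K' : Set V, G.IsClique K' → K ⊆ K' → K' = K

/-- The graph obtained from `G` by subdividing the edge `uv` twice: the edge `uv` is removed and
two new vertices `x = Sum.inr 0` and `y = Sum.inr 1` are added, together with the edges `ux`,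
`xy` and `yv`. -/
def SimpleGraph.subdivideTwice (G : SimpleGraph V) (u v : V) : SimpleGraph (V ⊕ Fin 2) where
  Adj a b :=
    match a, b with
    | Sum.inl a, Sum.inl b => G.Adj a b ∧ ¬(a = u ∧ b = v) ∧ ¬(a = v ∧ b = u)
    | Sum.inl a, Sum.inr i => (i = 0 ∧ a = u) ∨ (i = 1 ∧ a = v)
    | Sum.inr i, Sum.inl b => (i = 0 ∧ b = u) ∨ (i = 1 ∧ b = v)
    | Sum.inr i, Sum.inr j => i ≠ j
  symm := ⟨by
    rintro (a | i) (b | j) h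
    · exact ⟨h.1.symm, fun hc => h.2.2 ⟨hc.2, hc.1⟩, fun hc => h.2.1 ⟨hc.2, hc.1⟩⟩
    · exact h
    · exact h
    · exact h.symm⟩
  loopless := ⟨by
    rintro (a | i) h
    · exact G.loopless.irrefl a h.1
    · exact h rfl⟩

/-- A vertex is forced if it belongs to every maximum independent set. -/
def SimpleGraph.IsForcedVertex (G : SimpleGraph V) (w : V) : Prop :=
  ∀ I : Set V, G.IsIndepSet' I → I.ncard = G.indepNum' → w ∈ I

section Aux

variable {V : Type*} [Fintype V] {G : SimpleGraph V} {u v : V}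

private lemma aux_indep_ncard_le {s : Set V} (h : G.IsIndepSet' s) :
    s.ncard ≤ G.indepNum' := by
  apply le_csSup
  · refine ⟨Nat.card V, ?_⟩
    rintro n ⟨t, _, rfl⟩
    have := Set.ncard_le_ncard (Set.subset_univ t) Set.finite_univ
    simpa [Set.ncard_univ] using this
  · exact ⟨s, h, rfl⟩

private lemma aux_exists_max (G : SimpleGraph V) :
    ∃ s : Set V, G.IsIndepSet' s ∧ s.ncard = G.indepNum' := by
  have hne : {n | ∃ s : Set V, G.IsIndepSet' s ∧ s.ncard = n}.Nonempty :=
    ⟨0, ∅, by simp [SimpleGraph.IsIndepSet'], by simp⟩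
  have hbdd : BddAbove {n | ∃ s : Set V, G.IsIndepSet' s ∧ s.ncard = n} := by
    refine ⟨Nat.card V, ?_⟩
    rintro n ⟨t, _, rfl⟩
    have := Set.ncard_le_ncard (Set.subset_univ t) Set.finite_univ
    simpa [Set.ncard_univ] using this
  exact Nat.sSup_mem hne hbdd

private lemma aux_split_ncard (I' : Set (V ⊕ Fin 2)) :
    I'.ncard = (Sum.inl ⁻¹' I').ncard + (Sum.inr ⁻¹' I').ncard := by
  have h : I' = Sum.inl '' (Sum.inl ⁻¹' I') ∪ Sum.inr '' (Sum.inr ⁻¹' I') := by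
    ext z; cases z <;> simp
  conv_lhs => rw [h]
  rw [Set.ncard_union_eq, Set.ncard_image_of_injective _ Sum.inl_injective,
    Set.ncard_image_of_injective _ Sum.inr_injective]
  rw [Set.disjoint_left]
  rintro z ⟨a, _, rfl⟩ ⟨b, _, hb⟩
  simp at hb

private lemma aux_ext_ncard (I : Set V) (i : Fin 2) :
    (insert (Sum.inr i) (Sum.inl '' I) : Set (V ⊕ Fin 2)).ncard = I.ncard + 1 := by
  rw [Set.ncard_insert_of_notMem (by simp),
    Set.ncard_image_of_injective _ Sum.inl_injective]

private lemma aux_ext_indep0 {I : Set V} (h : G.IsIndepSet' I) (hu : u ∉ I) :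
    (G.subdivideTwice u v).IsIndepSet' (insert (Sum.inr 0) (Sum.inl '' I)) := by
  intro a ha b hb hne hadj
  simp only [Set.mem_insert_iff, Set.mem_image] at ha hb
  rcases ha with rfl | ⟨a', ha', rfl⟩ <;> rcases hb with rfl | ⟨b', hb', rfl⟩
  · exact hne rfl
  · rcases hadj with ⟨_, rfl⟩ | ⟨h01, _⟩
    · exact hu hb'
    · exact absurd h01 (by decide)
  · rcases hadj with ⟨_, rfl⟩ | ⟨h01, _⟩
    · exact hu ha'
    · exact absurd h01 (by decide)
  · exact h ha' hb' (fun e => hne (congrArg _ e)) hadj.1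

private lemma aux_ext_indep1 {I : Set V} (h : G.IsIndepSet' I) (hv : v ∉ I) :
    (G.subdivideTwice u v).IsIndepSet' (insert (Sum.inr 1) (Sum.inl '' I)) := by
  intro a ha b hb hne hadj
  simp only [Set.mem_insert_iff, Set.mem_image] at ha hb
  rcases ha with rfl | ⟨a', ha', rfl⟩ <;> rcases hb with rfl | ⟨b', hb', rfl⟩
  · exact hne rfl
  · rcases hadj with ⟨h10, _⟩ | ⟨_, rfl⟩
    · exact absurd h10 (by decide)
    · exact hv hb'
  · rcases hadj with ⟨h10, _⟩ | ⟨_, rfl⟩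
    · exact absurd h10 (by decide)
    · exact hv ha'
  · exact h ha' hb' (fun e => hne (congrArg _ e)) hadj.1

private lemma aux_restr {I' : Set (V ⊕ Fin 2)}
    (h : (G.subdivideTwice u v).IsIndepSet' I') {S : Set V}
    (hS : ∀ a ∈ S, Sum.inl a ∈ I')
    (hguard : ∀ a ∈ S, ∀ b ∈ S, ¬(a = u ∧ b = v)) :
    G.IsIndepSet' S := by
  intro a ha b hb hne hadj
  exact h (hS a ha) (hS b hb) (fun e => hne (Sum.inl_injective e))
    ⟨hadj, hguard a ha b hb, fun ⟨h1, h2⟩ => hguard b hb a ha ⟨h2, h1⟩⟩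

private lemma aux_B_le_one {I' : Set (V ⊕ Fin 2)}
    (h : (G.subdivideTwice u v).IsIndepSet' I') :
    (Sum.inr ⁻¹' I' : Set (Fin 2)).ncard ≤ 1 := by
  have hsub : (Sum.inr ⁻¹' I' : Set (Fin 2)).Subsingleton := by
    intro i hi j hj
    by_contra hne
    exact h hi hj (fun e => hne (Sum.inr_injective e)) hne
  rcases hsub.eq_empty_or_singleton with he | ⟨a, he⟩ <;> simp [he]

private lemma aux_indepNum_subdivide (huv : G.Adj u v) :
    (G.subdivideTwice u v).indepNum' = G.indepNum' + 1 := by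
  refine le_antisymm ?_ ?_
  · obtain ⟨I', hI', hcard⟩ := aux_exists_max (G.subdivideTwice u v)
    rw [← hcard]
    set A : Set V := Sum.inl ⁻¹' I' with hA
    by_cases hboth : u ∈ A ∧ v ∈ A
    · have hB : (Sum.inr ⁻¹' I' : Set (Fin 2)) = ∅ := by
        ext i
        simp only [Set.mem_preimage, Set.mem_empty_iff_false, iff_false]
        intro hi
        rcases i with ⟨iv, hiv⟩
        interval_cases iv
        · exact hI' hi hboth.1 (by simp) (Or.inl ⟨rfl, rfl⟩)
        · exact hI' hi hboth.2 (by simp) (Or.inr ⟨rfl, rfl⟩)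
      have hsplit := aux_split_ncard I'
      rw [← hA, hB] at hsplit
      simp only [Set.ncard_empty, add_zero] at hsplit
      have hdiff : G.IsIndepSet' (A \ {v}) := by
        refine aux_restr hI' (fun a ha => ha.1) ?_
        rintro a ha b hb ⟨rfl, rfl⟩
        exact hb.2 rfl
      have hd : (A \ {v}).ncard + 1 = A.ncard :=
        Set.ncard_diff_singleton_add_one hboth.2
      have := aux_indep_ncard_le hdiff
      omega
    · have hAind : G.IsIndepSet' A := by
        refine aux_restr hI' (fun a ha => ha) ?_
        rintro a ha b hb ⟨rfl, rfl⟩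
        exact hboth ⟨ha, hb⟩
      have h1 := aux_indep_ncard_le hAind
      have h2 := aux_B_le_one hI'
      have hsplit := aux_split_ncard I'
      rw [← hA] at hsplit
      omega
  · obtain ⟨I, hI, hcard⟩ := aux_exists_max G
    by_cases hu : u ∈ I
    · have hv : v ∉ I := fun hv => hI hu hv huv.ne huv
      have := aux_indep_ncard_le (aux_ext_indep1 (u := u) hI hv)
      rw [aux_ext_ncard, hcard] at this
      exact this
    · have := aux_indep_ncard_le (aux_ext_indep0 (v := v) hI hu)
      rw [aux_ext_ncard, hcard] at this
      exact this

end Aux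

/-- `G` has a forced vertex iff the graph obtained from `G` by subdividing the
edge `uv` twice has a forced vertex. -/
theorem stmt6 {V : Type*} [Fintype V] (G : SimpleGraph V) (u v : V) (huv : G.Adj u v) :
    (∃ w, G.IsForcedVertex w) ↔ ∃ w, (G.subdivideTwice u v).IsForcedVertex w := by
  have hα := aux_indepNum_subdivide huv
  constructor
  · rintro ⟨w, hw⟩
    refine ⟨Sum.inl w, ?_⟩
    intro I' hI' hcard
    rw [hα] at hcard
    set A : Set V := Sum.inl ⁻¹' I' with hA
    by_cases hboth : u ∈ A ∧ v ∈ A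
    · have hB : (Sum.inr ⁻¹' I' : Set (Fin 2)) = ∅ := by
        ext i
        simp only [Set.mem_preimage, Set.mem_empty_iff_false, iff_false]
        intro hi
        rcases i with ⟨iv, hiv⟩
        interval_cases iv
        · exact hI' hi hboth.1 (by simp) (Or.inl ⟨rfl, rfl⟩)
        · exact hI' hi hboth.2 (by simp) (Or.inr ⟨rfl, rfl⟩)
      have hsplit := aux_split_ncard I'
      rw [← hA, hB] at hsplit
      simp only [Set.ncard_empty, add_zero] at hsplit
      have hdiff : G.IsIndepSet' (A \ {v}) := by
        refine aux_restr hI' (fun a ha => ha.1) ?_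
        rintro a ha b hb ⟨rfl, rfl⟩
        exact hb.2 rfl
      have hd : (A \ {v}).ncard + 1 = A.ncard :=
        Set.ncard_diff_singleton_add_one hboth.2
      have hmax : (A \ {v}).ncard = G.indepNum' := by omega
      exact (hw _ hdiff hmax).1
    · have hAind : G.IsIndepSet' A := by
        refine aux_restr hI' (fun a ha => ha) ?_
        rintro a ha b hb ⟨rfl, rfl⟩
        exact hboth ⟨ha, hb⟩
      have h1 := aux_indep_ncard_le hAind
      have h2 := aux_B_le_one hI'
      have hsplit := aux_split_ncard I'
      rw [← hA] at hsplit
      have hmax : A.ncard = G.indepNum' := by omega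
      exact hw _ hAind hmax
  · rintro ⟨(w | i), hw⟩
    · refine ⟨w, ?_⟩
      intro I hI hcard
      by_cases hu : u ∈ I
      · have hv : v ∉ I := fun hv => hI hu hv huv.ne huv
        have hm := hw _ (aux_ext_indep1 (u := u) hI hv)
          (by rw [aux_ext_ncard, hcard, hα])
        rcases hm with hm | ⟨w', hw', he⟩
        · exact absurd hm (by simp)
        · rwa [← Sum.inl_injective he]
      · have hm := hw _ (aux_ext_indep0 (v := v) hI hu)
          (by rw [aux_ext_ncard, hcard, hα])
        rcases hm with hm | ⟨w', hw', he⟩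
        · exact absurd hm (by simp)
        · rwa [← Sum.inl_injective he]
    · rcases i with ⟨iv, hiv⟩
      interval_cases iv
      · -- forced vertex is x = inr 0; then v is forced in G
        refine ⟨v, ?_⟩
        intro I hI hcard
        by_contra hv
        have hm := hw _ (aux_ext_indep1 (u := u) hI hv)
          (by rw [aux_ext_ncard, hcard, hα])
        rcases hm with hm | ⟨w', hw', he⟩
        · exact absurd hm (by simp [Fin.ext_iff])
        · simp at he
      · -- forced vertex is y = inr 1; then u is forced in G
        refine ⟨u, ?_⟩
        intro I hI hcard
        by_contra hu
        have hm := hw _ (aux_ext_indep0 (v := v) hI hu)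
          (by rw [aux_ext_ncard, hcard, hα])
        rcases hm with hm | ⟨w', hw', he⟩
        · exact absurd hm (by simp [Fin.ext_iff])
        · simp at he
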